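/- Let F : Y → [0, +∞) be convex and Fréchet differentiable with gradient ∇F, let J : X → ℝ ∪ {+∞} be proper and convex, let τ > 0 be such that J_τ(u) := J(u) − τ F(Ku) is convex on X, and let δ ≥ 0 and u† ∈ X with F(Ku†) ≤ δ and J_τ(u†) < ∞. Suppose for a fixed k ≥ 1 the linearized Bregman iterates satisfy: q^{k−1} ∈ ∂J_τ(u^{k−1}), q^k := q^{k−1} − τ K*∇F(Ku^k) ∈ ∂J_τ(u^k), and δ < F(Ku^k). Then the surrogate Bregman distances to u† are strictly Fejér monotone: D_{J_τ}^{q^k}(u†, u^k) < D_{J_τ}^{q^{k−1}}(u†, u^{k−1}). -/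

import Mathlib

open scoped RealInnerProductSpace

/-- Subgradient of an extended-real-valued convex function:
p ∈ ∂G(v) means G(w) ≥ G(v) + ⟨p, w − v⟩ for all w. -/
def ESubgradAt {X : Type*} [NormedAddCommGroup X] [InnerProductSpace ℝ X]
    (G : X → EReal) (p v : X) : Prop :=
  ∀ w, G v + (⟪p, w - v⟫ : ℝ) ≤ G w

/-- Generalized Bregman distance D_G^p(u, v) := G(u) − G(v) − ⟨p, u − v⟩. -/
noncomputable def ebreg {X : Type*} [NormedAddCommGroup X] [InnerProductSpace ℝ X]
    (G : X → EReal) (p u v : X) : EReal :=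
  G u - G v - (⟪p, u - v⟫ : ℝ)


private lemma convex_grad_ineq' {Y : Type*} [NormedAddCommGroup Y] [InnerProductSpace ℝ Y]
    [CompleteSpace Y]
    (F : Y → ℝ) (hFconv : ConvexOn ℝ Set.univ F) {g x : Y}
    (h : HasGradientAt F g x) (y : Y) :
    F x + ⟪g, y - x⟫ ≤ F y := by
  have hL : HasDerivAt (fun t : ℝ => x + t • (y - x)) (y - x) (0 : ℝ) := by
    simpa using ((hasDerivAt_id (0:ℝ)).smul_const (y - x)).const_add x
  have hx0 : x + (0:ℝ) • (y - x) = x := by simp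
  have hcomp : HasDerivAt (fun t : ℝ => F (x + t • (y - x))) (⟪g, y - x⟫ : ℝ) (0 : ℝ) := by
    have := (hx0 ▸ h).hasFDerivAt.comp_hasDerivAt (0:ℝ) hL
    simpa [HasGradientAt, Function.comp_def] using this
  have htend := hasDerivAt_iff_tendsto_slope.mp hcomp
  have htend' : Filter.Tendsto (slope (fun t : ℝ => F (x + t • (y - x))) 0)
      (nhdsWithin 0 (Set.Ioi 0)) (nhds (⟪g, y - x⟫ : ℝ)) :=
    htend.mono_left (nhdsWithin_mono _ (by intro t ht; exact ne_of_gt ht))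
  have hev : ∀ᶠ t in nhdsWithin (0:ℝ) (Set.Ioi 0),
      slope (fun t : ℝ => F (x + t • (y - x))) 0 t ≤ F y - F x := by
    filter_upwards [Ioo_mem_nhdsGT_of_mem (by constructor <;> norm_num : (0:ℝ) ∈ Set.Ico 0 1)]
      with t ht
    obtain ⟨ht0, ht1⟩ := ht
    have hconv := hFconv.2 (Set.mem_univ y) (Set.mem_univ x) (le_of_lt ht0)
      (by linarith : (0:ℝ) ≤ 1 - t) (by ring)
    have heq : t • y + (1 - t) • x = x + t • (y - x) := by
      simp [smul_sub, sub_smul]; abel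
    rw [heq] at hconv
    have hkey : F (x + t • (y - x)) - F x ≤ t * (F y - F x) := by
      have := hconv; simp only [smul_eq_mul] at this; nlinarith
    rw [slope_def_field, hx0, sub_zero, div_le_iff₀ ht0]
    nlinarith
  have := le_of_tendsto htend' hev
  linarith

private lemma esub_ne_bot' (a : EReal) (h : a ≠ ⊥) (r : ℝ) : a - (r:EReal) ≠ ⊥ := by
  rw [sub_eq_add_neg, ← EReal.coe_neg]
  induction a using EReal.rec with
  | bot => exact absurd rfl h
  | coe a => rw [← EReal.coe_add]; exact EReal.coe_ne_bot _
  | top => rw [EReal.top_add_coe]; simp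

/-- **Strict Fejér monotonicity of the linearized Bregman iteration before the
discrepancy principle is met.** F : Y → [0, ∞) convex Fréchet differentiable with
gradient ∇F, J proper convex, τ > 0 with J_τ(u) := J(u) − τF(Ku) convex,
F(Ku†) ≤ δ and J_τ(u†) < ∞. If q^{k−1} ∈ ∂J_τ(u^{k−1}),
q^k := q^{k−1} − τK*∇F(Ku^k) ∈ ∂J_τ(u^k) and δ < F(Ku^k), then
D_{J_τ}^{q^k}(u†, u^k) < D_{J_τ}^{q^{k−1}}(u†, u^{k−1}). -/
theorem stmt_13
    {X Y : Type*} [NormedAddCommGroup X] [InnerProductSpace ℝ X] [CompleteSpace X]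
    [NormedAddCommGroup Y] [InnerProductSpace ℝ Y] [CompleteSpace Y]
    (K : X →L[ℝ] Y)
    (F : Y → ℝ) (gF : Y → Y)
    (hFgrad : ∀ y, HasGradientAt F (gF y) y)
    (hFconv : ConvexOn ℝ Set.univ F) (hFnonneg : ∀ y, 0 ≤ F y)
    (J : X → EReal)
    (hJbot : ∀ u, J u ≠ ⊥)
    (hJproper : ∃ u, J u ≠ ⊤)
    (hJconv : ∀ u v : X, ∀ t : ℝ, 0 ≤ t → t ≤ 1 →
      J (t • u + (1 - t) • v) ≤ (t : EReal) * J u + ((1 - t : ℝ) : EReal) * J v)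
    (τ : ℝ) (hτ : 0 < τ)
    (hJτconv : ∀ u v : X, ∀ t : ℝ, 0 ≤ t → t ≤ 1 →
      (J (t • u + (1 - t) • v) - ((τ * F (K (t • u + (1 - t) • v)) : ℝ) : EReal))
        ≤ (t : EReal) * (J u - ((τ * F (K u) : ℝ) : EReal))
          + ((1 - t : ℝ) : EReal) * (J v - ((τ * F (K v) : ℝ) : EReal)))
    (δ : ℝ) (hδ : 0 ≤ δ) (udag : X)
    (hdata : F (K udag) ≤ δ)
    (hJτudag : J udag - ((τ * F (K udag) : ℝ) : EReal) ≠ ⊤)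
    (u₀ u₁ q₀ : X)
    (hq₀ : ESubgradAt (fun x => J x - ((τ * F (K x) : ℝ) : EReal)) q₀ u₀)
    (hq₁ : ESubgradAt (fun x => J x - ((τ * F (K x) : ℝ) : EReal))
      (q₀ - τ • ContinuousLinearMap.adjoint K (gF (K u₁))) u₁)
    (hdisc : δ < F (K u₁)) :
    ebreg (fun x => J x - ((τ * F (K x) : ℝ) : EReal))
        (q₀ - τ • ContinuousLinearMap.adjoint K (gF (K u₁))) udag u₁
      < ebreg (fun x => J x - ((τ * F (K x) : ℝ) : EReal)) q₀ udag u₀ := by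
  set G : X → EReal := fun x => J x - ((τ * F (K x) : ℝ) : EReal) with hG
  have hGbot : ∀ x, G x ≠ ⊥ := fun x => esub_ne_bot' _ (hJbot x) _
  have hnetop : ∀ (v p : X), ESubgradAt G p v → G v ≠ ⊤ := by
    intro v p hsub hv
    have h := hsub udag
    rw [hv, EReal.top_add_coe] at h
    exact hJτudag (top_le_iff.mp h)
  have h0top : G u₀ ≠ ⊤ := hnetop _ _ hq₀
  have h1top : G u₁ ≠ ⊤ := hnetop _ _ hq₁
  set a := (G udag).toReal with ha
  set b := (G u₀).toReal with hb
  set c := (G u₁).toReal with hc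
  have hEa : G udag = (a : EReal) := (EReal.coe_toReal hJτudag (hGbot udag)).symm
  have hEb : G u₀ = (b : EReal) := (EReal.coe_toReal h0top (hGbot u₀)).symm
  have hEc : G u₁ = (c : EReal) := (EReal.coe_toReal h1top (hGbot u₁)).symm
  -- key fact 1 : b + ⟪q₀, u₁ - u₀⟫ ≤ c
  have hf1 : b + ⟪q₀, u₁ - u₀⟫ ≤ c := by
    have h := hq₀ u₁
    rw [hEb, hEc, ← EReal.coe_add] at h
    exact_mod_cast h
  -- key fact 2 : gradient inequality
  have hf2 : F (K u₁) + ⟪gF (K u₁), K udag - K u₁⟫ ≤ F (K udag) :=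
    convex_grad_ineq' F hFconv (hFgrad (K u₁)) (K udag)
  -- inner product computation
  have hinner : ⟪q₀ - τ • ContinuousLinearMap.adjoint K (gF (K u₁)), udag - u₁⟫
      = ⟪q₀, udag - u₀⟫ - ⟪q₀, u₁ - u₀⟫ - τ * ⟪gF (K u₁), K udag - K u₁⟫ := by
    rw [inner_sub_left, real_inner_smul_left, ContinuousLinearMap.adjoint_inner_left]
    rw [show (udag - u₁ : X) = (udag - u₀) - (u₁ - u₀) by abel]
    rw [inner_sub_right]
    simp only [map_sub]
    rw [show (K udag - K u₀ - (K u₁ - K u₀) : Y) = K udag - K u₁ from by abel]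
  -- reduce the goal to reals
  show G udag - G u₁ - (⟪q₀ - τ • ContinuousLinearMap.adjoint K (gF (K u₁)), udag - u₁⟫ : ℝ)
      < G udag - G u₀ - (⟪q₀, udag - u₀⟫ : ℝ)
  rw [hEa, hEb, hEc, ← EReal.coe_sub, ← EReal.coe_sub, ← EReal.coe_sub, ← EReal.coe_sub,
    EReal.coe_lt_coe_iff, hinner]
  have hτmul : τ * ⟪gF (K u₁), K udag - K u₁⟫ ≤ τ * (δ - F (K u₁)) := by
    apply mul_le_mul_of_nonneg_left _ hτ.le
    linarith
  nlinarith [mul_pos hτ (sub_pos.mpr hdisc)]
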